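/- Let C̃ ⊆ F_q[x]^ℓ be the preimage of a λ-quasi-twisted code C under reduction mod x^m − λ, with reduced Gröbner basis given by the rows of an upper-triangular ℓ×ℓ matrix G̃(x) with diagonal entries g_{j,j}(x) dividing x^m − λ. Then the F_q-dimension of C equals mℓ − Σ_{j=0}^{ℓ−1} deg(g_{j,j}(x)). -/

import Mathlib

open Polynomial

/-- The `F_q[x]`-submodule of `F_q[x]^ℓ` spanned by the rows of `G`. -/
noncomputable def qtSpan {F : Type*} [Field F] {ℓ : ℕ}
    (G : Matrix (Fin ℓ) (Fin ℓ) (Polynomial F)) :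
    Submodule (Polynomial F) (Fin ℓ → Polynomial F) :=
  Submodule.span (Polynomial F) (Set.range fun i => G i)

/-- The `F`-linear map sending an `m × ℓ` array over `F` to the vector of
column polynomials `c_j(x) = ∑_k c_{k,j} x^k`. -/
noncomputable def toPolyL (F : Type*) [CommSemiring F] (m ℓ : ℕ) :
    (Fin m × Fin ℓ → F) →ₗ[F] (Fin ℓ → Polynomial F) where
  toFun c := fun j => ∑ k : Fin m, Polynomial.C (c (k, j)) * Polynomial.X ^ (k : ℕ)
  map_add' c c' := by
    funext j
    simp [map_add, add_mul, Finset.sum_add_distrib]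
  map_smul' a c := by
    funext j
    simp [Polynomial.smul_eq_C_mul, Finset.mul_sum, mul_assoc]

section Aux

variable {F : Type*} [Field F]

lemma coeff_sum_fin {n : ℕ} (c : Fin n → F) (k : Fin n) :
    (∑ i : Fin n, C (c i) * X ^ (i : ℕ)).coeff (k : ℕ) = c k := by
  rw [finset_sum_coeff, Finset.sum_eq_single k]
  · simp
  · intro i _ hik
    simp only [coeff_C_mul, coeff_X_pow]
    rw [if_neg (fun h => hik (Fin.val_injective h.symm)), mul_zero]
  · simp

lemma eq_sum_fin {n : ℕ} {p : F[X]} (h : p.degree < n) :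
    p = ∑ i : Fin n, C (p.coeff (i : ℕ)) * X ^ (i : ℕ) := by
  by_cases hp : p = 0
  · simp [hp]
  · have hn : p.natDegree < n := (natDegree_lt_iff_degree_lt hp).mpr h
    conv_lhs => rw [p.as_sum_range' n hn]
    rw [← Fin.sum_univ_eq_sum_range (fun i => (monomial i) (p.coeff i)) n]
    simp [C_mul_X_pow_eq_monomial]

/-- The reduced generators. -/
noncomputable def qtR (m ℓ : ℕ) (lam : F) (G : Matrix (Fin ℓ) (Fin ℓ) (Polynomial F)) :
    (Σ j : Fin ℓ, Fin (m - (G j j).natDegree)) → (Fin ℓ → Polynomial F) :=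
  fun p j' => (X ^ (p.2 : ℕ) * G p.1 j') %ₘ (X ^ m - C lam)

variable {m ℓ : ℕ} {lam : F} {G : Matrix (Fin ℓ) (Fin ℓ) (Polynomial F)}

lemma div_aux (hupper : ∀ i j, j < i → G i j = 0) (hmonic : ∀ j, (G j j).Monic)
    {w : Fin ℓ → Polynomial F} (hw : w ∈ qtSpan G) (j0 : Fin ℓ)
    (hz : ∀ j, j < j0 → w j = 0) : ∃ a, w j0 = a * G j0 j0 := by
  rw [qtSpan, Submodule.mem_span_range_iff_exists_fun] at hw
  obtain ⟨c, hc⟩ := hw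
  have hcomp : ∀ j, w j = ∑ i, c i * G i j := by
    intro j; rw [← hc]; simp [Finset.sum_apply]
  have key : ∀ n : ℕ, ∀ i : Fin ℓ, (i : ℕ) = n → i < j0 → c i = 0 := by
    intro n
    induction n using Nat.strong_induction_on with
    | _ n ih =>
      intro i hin hij0
      have h0 : (0 : F[X]) = c i * G i i := by
        rw [← hz i hij0, hcomp i]
        refine Finset.sum_eq_single i (fun i' _ hne => ?_) (by simp)
        rcases lt_or_gt_of_ne hne with h | h
        · have hlt : (i' : ℕ) < n := hin ▸ (Fin.lt_def.mp h)
          rw [ih (i' : ℕ) hlt i' rfl (h.trans hij0), zero_mul]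
        · rw [hupper i' i h, mul_zero]
      rcases mul_eq_zero.mp h0.symm with h | h
      · exact h
      · exact absurd h (hmonic i).ne_zero
  refine ⟨c j0, ?_⟩
  rw [hcomp j0]
  refine Finset.sum_eq_single j0 (fun i _ hne => ?_) (by simp)
  rcases lt_or_gt_of_ne hne with h | h
  · rw [key (i : ℕ) i rfl h, zero_mul]
  · rw [hupper i j0 h, mul_zero]

lemma rmem (hm : 0 < m)
    (hK : ∀ j : Fin ℓ, (fun j' => if j' = j then X ^ m - C lam else 0) ∈ qtSpan G)
    (p : Σ j : Fin ℓ, Fin (m - (G j j).natDegree)) : qtR m ℓ lam G p ∈ qtSpan G := by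
  have hf : (X ^ m - C lam : F[X]).Monic := monic_X_pow_sub_C lam hm.ne'
  have heq : qtR m ℓ lam G p
      = (X ^ (p.2 : ℕ) : F[X]) • G p.1 - ∑ j' : Fin ℓ,
          ((X ^ (p.2 : ℕ) * G p.1 j') /ₘ (X ^ m - C lam)) •
          (fun j'' => if j'' = j' then X ^ m - C lam else 0 : Fin ℓ → F[X]) := by
    funext j''
    simp only [qtR, Pi.sub_apply, Pi.smul_apply, smul_eq_mul, Finset.sum_apply]
    rw [modByMonic_eq_sub_mul_div _ (X ^ m - C lam)]
    simp [mul_ite, mul_zero, Finset.sum_ite_eq, mul_comm]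
  rw [heq]
  exact Submodule.sub_mem _
    (Submodule.smul_mem _ _ (Submodule.subset_span ⟨p.1, rfl⟩))
    (Submodule.sum_mem _ fun j' _ => Submodule.smul_mem _ _ (hK j'))



lemma degree_qtR_lt (hm : 0 < m) (p : Σ j : Fin ℓ, Fin (m - (G j j).natDegree)) (j : Fin ℓ) :
    (qtR m ℓ lam G p j).degree < (m : ℕ) := by
  have hf : (X ^ m - C lam : F[X]).Monic := monic_X_pow_sub_C lam hm.ne'
  have := degree_modByMonic_lt (X ^ (p.2 : ℕ) * G p.1 j) hf
  rwa [degree_X_pow_sub_C hm] at this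

lemma qtR_self (hm : 0 < m) (hmonic : ∀ j, (G j j).Monic) (j0 : Fin ℓ)
    (k : Fin (m - (G j0 j0).natDegree)) :
    qtR m ℓ lam G ⟨j0, k⟩ j0 = X ^ (k : ℕ) * G j0 j0 := by
  have hf : (X ^ m - C lam : F[X]).Monic := monic_X_pow_sub_C lam hm.ne'
  have hne : (X ^ (k : ℕ) * G j0 j0 : F[X]) ≠ 0 :=
    mul_ne_zero (pow_ne_zero _ X_ne_zero) (hmonic j0).ne_zero
  have hk : (k : ℕ) < m - (G j0 j0).natDegree := k.2
  have hdeg : (X ^ (k : ℕ) * G j0 j0 : F[X]).degree < (X ^ m - C lam : F[X]).degree := by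
    rw [degree_X_pow_sub_C hm]
    refine (natDegree_lt_iff_degree_lt hne).mp ?_
    rw [natDegree_mul (pow_ne_zero _ X_ne_zero) (hmonic j0).ne_zero, natDegree_X_pow]
    omega
  exact (modByMonic_eq_self_iff hf).mpr hdeg

lemma qtR_lower (hm : 0 < m) (hupper : ∀ i j, j < i → G i j = 0) {j0 j : Fin ℓ}
    (h : j < j0) (k : Fin (m - (G j0 j0).natDegree)) :
    qtR m ℓ lam G ⟨j0, k⟩ j = 0 := by
  simp [qtR, hupper j0 j h]

lemma span_aux (hm : 0 < m) (hupper : ∀ i j, j < i → G i j = 0)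
    (hmonic : ∀ j, (G j j).Monic)
    (hK : ∀ j : Fin ℓ, (fun j' => if j' = j then X ^ m - C lam else 0) ∈ qtSpan G)
    (t : ℕ) :
    ∀ w : Fin ℓ → Polynomial F, w ∈ qtSpan G → (∀ j, (w j).degree < (m : ℕ)) →
      (∀ j : Fin ℓ, (j : ℕ) + t < ℓ → w j = 0) →
      w ∈ Submodule.span F (Set.range (qtR m ℓ lam G)) := by
  induction t with
  | zero =>
    intro w _ _ hz
    have : w = 0 := funext fun j => hz j (by omega)
    rw [this]; exact Submodule.zero_mem _
  | succ t IH =>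
    intro w hw hdw hz
    by_cases hex : ∃ j0 : Fin ℓ, (j0 : ℕ) + t + 1 = ℓ
    · obtain ⟨j0, hj0⟩ := hex
      have hzlt : ∀ j, j < j0 → w j = 0 := fun j hj =>
        hz j (by have := Fin.lt_def.mp hj; omega)
      obtain ⟨a, ha⟩ := div_aux hupper hmonic hw j0 hzlt
      set d := (G j0 j0).natDegree with hddef
      have hadeg : a.degree < ((m - d : ℕ) : WithBot ℕ) := by
        by_cases ha0 : a = 0
        · rw [ha0, degree_zero]; exact WithBot.bot_lt_coe _
        · have hg0 : G j0 j0 ≠ 0 := (hmonic j0).ne_zero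
          have hlt : (a * G j0 j0).natDegree < m := by
            refine (natDegree_lt_iff_degree_lt (mul_ne_zero ha0 hg0)).mpr ?_
            rw [← ha]; exact hdw j0
          rw [natDegree_mul ha0 hg0] at hlt
          exact (natDegree_lt_iff_degree_lt ha0).mp (by omega)
      have hasum := eq_sum_fin hadeg
      set w' := w - ∑ k : Fin (m - d), a.coeff (k : ℕ) • qtR m ℓ lam G ⟨j0, k⟩ with hw'def
      have hw' : w' ∈ qtSpan G :=
        Submodule.sub_mem _ hw (Submodule.sum_mem _ fun k _ =>
          Submodule.smul_of_tower_mem _ _ (rmem hm hK ⟨j0, k⟩))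
      have hdw' : ∀ j, (w' j).degree < (m : ℕ) := by
        intro j
        have h1 : ((∑ k : Fin (m - d), a.coeff (k : ℕ) • qtR m ℓ lam G ⟨j0, k⟩) j).degree
            < (m : ℕ) := by
          rw [Finset.sum_apply]
          refine lt_of_le_of_lt (degree_sum_le _ _) ?_
          refine (Finset.sup_lt_iff (by exact WithBot.bot_lt_coe _)).mpr fun k _ => ?_
          refine lt_of_le_of_lt (degree_smul_le _ _) (degree_qtR_lt hm ⟨j0, k⟩ j)
        exact lt_of_le_of_lt (degree_sub_le _ _) (max_lt (hdw j) h1)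
      have hzw' : ∀ j : Fin ℓ, (j : ℕ) + t < ℓ → w' j = 0 := by
        intro j hj
        rcases lt_trichotomy j j0 with h | h | h
        · have : ∀ k : Fin (m - d), qtR m ℓ lam G ⟨j0, k⟩ j = 0 :=
            fun k => qtR_lower hm hupper h k
          simp [hw'def, hzlt j h, this]
        · subst h
          have hq : ∀ k : Fin (m - d), qtR m ℓ lam G ⟨j, k⟩ j = X ^ (k : ℕ) * G j j :=
            fun k => qtR_self hm hmonic j k
          have : (∑ k : Fin (m - d), a.coeff (k : ℕ) • qtR m ℓ lam G ⟨j, k⟩) j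
              = a * G j j := by
            rw [Finset.sum_apply]
            calc ∑ k : Fin (m - d), (a.coeff (k : ℕ) • qtR m ℓ lam G ⟨j, k⟩) j
                = ∑ k : Fin (m - d), C (a.coeff (k : ℕ)) * X ^ (k : ℕ) * G j j := by
                  refine Finset.sum_congr rfl fun k _ => ?_
                  rw [Pi.smul_apply, hq k, smul_eq_C_mul, mul_assoc]
              _ = (∑ k : Fin (m - d), C (a.coeff (k : ℕ)) * X ^ (k : ℕ)) * G j j := by
                  rw [Finset.sum_mul]
              _ = a * G j j := by rw [← hasum]
          simp [hw'def, this, ← ha]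
        · exfalso
          have := Fin.lt_def.mp h
          omega
      have hmem := IH w' hw' hdw' hzw'
      have hfin : w = w' + ∑ k : Fin (m - d), a.coeff (k : ℕ) • qtR m ℓ lam G ⟨j0, k⟩ := by
        rw [hw'def]; abel
      rw [hfin]
      exact Submodule.add_mem _ hmem (Submodule.sum_mem _ fun k _ =>
        Submodule.smul_mem _ _ (Submodule.subset_span ⟨⟨j0, k⟩, rfl⟩))
    · refine IH w hw hdw fun j hj => hz j ?_
      have : (j : ℕ) + t + 1 ≠ ℓ := fun h => hex ⟨j, h⟩
      omega

lemma indep_qtR (hm : 0 < m) (hupper : ∀ i j, j < i → G i j = 0)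
    (hmonic : ∀ j, (G j j).Monic) :
    LinearIndependent F (qtR m ℓ lam G) := by
  rw [Fintype.linearIndependent_iff]
  intro t ht
  suffices key : ∀ n : ℕ, ∀ j : Fin ℓ, (j : ℕ) = n →
      ∀ k : Fin (m - (G j j).natDegree), t ⟨j, k⟩ = 0 by
    intro p; exact key p.1 p.1 rfl p.2
  intro n
  induction n using Nat.strong_induction_on with
  | _ n ih =>
    intro j hj k
    have h0 : (∑ p, t p • qtR m ℓ lam G p) j = 0 := by rw [ht]; rfl
    rw [Finset.sum_apply, ← Finset.univ_sigma_univ, Finset.sum_sigma] at h0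
    have h1 : (∑ k' : Fin (m - (G j j).natDegree),
        C (t ⟨j, k'⟩) * X ^ (k' : ℕ)) * G j j = 0 := by
      rw [← h0]
      rw [Finset.sum_eq_single j]
      · rw [Finset.sum_mul]
        refine (Finset.sum_congr rfl fun k' _ => ?_).symm
        rw [Pi.smul_apply, qtR_self hm hmonic j k', smul_eq_C_mul, mul_assoc]
      · intro j' _ hne
        rcases lt_or_gt_of_ne hne with h | h
        · refine Finset.sum_eq_zero fun k' _ => ?_
          rw [Pi.smul_apply, ih (j' : ℕ) (hj ▸ Fin.lt_def.mp h) j' rfl k', zero_smul]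
        · refine Finset.sum_eq_zero fun k' _ => ?_
          rw [Pi.smul_apply, qtR_lower hm hupper h k', smul_zero]
      · simp
    rcases mul_eq_zero.mp h1 with h | h
    · have := congrArg (fun p => p.coeff (k : ℕ)) h
      rw [coeff_sum_fin (fun k' => t ⟨j, k'⟩) k] at this
      simpa using this
    · exact absurd h (hmonic j).ne_zero

end Aux


/-- Dimension formula for quasi-twisted codes (Lally–Fitzpatrick). -/
theorem stmt10 {F : Type*} [Field F] [Fintype F] (m ℓ : ℕ) (hm : 0 < m) (hℓ : 0 < ℓ)
    (hco : Nat.Coprime m (Fintype.card F)) (lam : F) (hlam : lam ≠ 0)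
    (G : Matrix (Fin ℓ) (Fin ℓ) (Polynomial F))
    (hupper : ∀ i j, j < i → G i j = 0)
    (hmonic : ∀ j, (G j j).Monic)
    (hdiag : ∀ j, G j j ∣ X ^ m - C lam)
    (hdeg : ∀ i j, i < j → (G i j).degree < (G j j).degree)
    (hfull : ∀ i j, i ≠ j → G j j = X ^ m - C lam → G i j = 0)
    (hK : ∀ j : Fin ℓ, (fun j' => if j' = j then X ^ m - C lam else 0) ∈ qtSpan G) :
    Module.finrank F
        ↥(Submodule.comap (toPolyL F m ℓ) ((qtSpan G).restrictScalars F)) =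
      m * ℓ - ∑ j, (G j j).natDegree := by
  classical
  have hf : (X ^ m - C lam : F[X]).Monic := monic_X_pow_sub_C lam hm.ne'
  have hd : ∀ j, (G j j).natDegree ≤ m := fun j => by
    have := natDegree_le_of_dvd (hdiag j) hf.ne_zero
    rwa [natDegree_X_pow_sub_C] at this
  set b : (Σ j : Fin ℓ, Fin (m - (G j j).natDegree)) → (Fin m × Fin ℓ → F) :=
    fun p q => (qtR m ℓ lam G p q.2).coeff (q.1 : ℕ) with hbdef
  have htb : ∀ p, toPolyL F m ℓ (b p) = qtR m ℓ lam G p := by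
    intro p; funext j
    show (∑ k : Fin m, C ((qtR m ℓ lam G p j).coeff (k : ℕ)) * X ^ (k : ℕ))
      = qtR m ℓ lam G p j
    exact (eq_sum_fin (degree_qtR_lt hm p j)).symm
  have hcomp : (⇑(toPolyL F m ℓ)) ∘ b = qtR m ℓ lam G := funext htb
  have hinj : Function.Injective (toPolyL F m ℓ) := by
    intro u v h
    funext q
    have hthis := congrArg (fun w : Fin ℓ → F[X] => (w q.2).coeff (q.1 : ℕ)) h
    calc u q = ((toPolyL F m ℓ u) q.2).coeff (q.1 : ℕ) :=
          (coeff_sum_fin (fun k => u (k, q.2)) q.1).symm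
      _ = ((toPolyL F m ℓ v) q.2).coeff (q.1 : ℕ) := hthis
      _ = v q := coeff_sum_fin (fun k => v (k, q.2)) q.1
  have hW : Submodule.comap (toPolyL F m ℓ) ((qtSpan G).restrictScalars F)
      = Submodule.span F (Set.range b) := by
    refine le_antisymm ?_ ?_
    · intro v hv
      have h1 : toPolyL F m ℓ v ∈ qtSpan G := hv
      have h2 : ∀ j, ((toPolyL F m ℓ v) j).degree < (m : ℕ) := fun j =>
        degree_sum_fin_lt (fun k => v (k, j))
      have h3 := span_aux hm hupper hmonic hK ℓ (toPolyL F m ℓ v) h1 h2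
        (fun j hj => absurd hj (by omega))
      rw [← hcomp, Set.range_comp, ← Submodule.map_span] at h3
      obtain ⟨u, hu, huv⟩ := Submodule.mem_map.mp h3
      exact hinj huv ▸ hu
    · rw [Submodule.span_le]
      rintro _ ⟨p, rfl⟩
      show toPolyL F m ℓ (b p) ∈ (qtSpan G).restrictScalars F
      rw [htb p]
      exact rmem hm hK p
  have hbi : LinearIndependent F b :=
    LinearIndependent.of_comp (toPolyL F m ℓ) (hcomp ▸ indep_qtR hm hupper hmonic)
  rw [hW, finrank_span_eq_card hbi, Fintype.card_sigma]
  simp only [Fintype.card_fin]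
  have hs : ∑ j : Fin ℓ, (m - (G j j).natDegree) + ∑ j : Fin ℓ, (G j j).natDegree
      = m * ℓ := by
    rw [← Finset.sum_add_distrib,
      Finset.sum_congr rfl (fun j _ => Nat.sub_add_cancel (hd j))]
    simp [Finset.sum_const, mul_comm]
  omega
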